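/- arXiv:1701.01131 — 5 statements merged into one kernel-verified Lean document; each statement's English description precedes it below -/
import Mathlib

section
/- If Ω is a compact Hausdorff topological space and every bounded sequence in C(Ω) (the Banach space of continuous real-valued functions with sup norm) has a subsequence converging weakly to some element of C(Ω), then Ω is finite. -/
open Filter Topology Set

theorem stmt_0 (Ω : Type*) [TopologicalSpace Ω] [CompactSpace Ω] [T2Space Ω]
    (h : ∀ x : ℕ → C(Ω, ℝ), (∃ M : ℝ, ∀ n, ‖x n‖ ≤ M) →
      ∃ φ : ℕ → ℕ, StrictMono φ ∧ ∃ x₀ : C(Ω, ℝ),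
        ∀ ξ : C(Ω, ℝ) →L[ℝ] ℝ, Tendsto (fun k => ξ (x (φ k))) atTop (𝓝 (ξ x₀))) :
    Finite Ω := by
  by_contra hfin
  rw [not_finite_iff_infinite] at hfin
  -- Step lemma: inside any infinite open set, find a nonempty open set and a
  -- disjoint infinite open set.
  have step : ∀ V : Set Ω, IsOpen V → V.Infinite →
      ∃ U W : Set Ω, IsOpen U ∧ U.Nonempty ∧ U ⊆ V ∧ IsOpen W ∧ W.Infinite ∧ W ⊆ V ∧
        Disjoint U W := by
    intro V hV hVinf
    obtain ⟨a, ha, b, hb, hab⟩ := hVinf.nontrivial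
    obtain ⟨A, B, hA, hB, haA, hbB, hAB⟩ := t2_separation hab
    by_cases hBinf : (B ∩ V).Infinite
    · exact ⟨A ∩ V, B ∩ V, hA.inter hV, ⟨a, haA, ha⟩, inter_subset_right,
        hB.inter hV, hBinf, inter_subset_right,
        (hAB.mono inter_subset_left inter_subset_left)⟩
    by_cases hAinf : (A ∩ V).Infinite
    · exact ⟨B ∩ V, A ∩ V, hB.inter hV, ⟨b, hbB, hb⟩, inter_subset_right,
        hA.inter hV, hAinf, inter_subset_right,
        (hAB.symm.mono inter_subset_left inter_subset_left)⟩
    · rw [not_infinite] at hAinf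
      have haAV : a ∈ A ∩ V := ⟨haA, ha⟩
      have hsingle : ({a} : Set Ω) = (A ∩ V) \ ((A ∩ V) \ {a}) := by
        ext x
        constructor
        · rintro rfl
          exact ⟨haAV, fun hx => hx.2 rfl⟩
        · rintro ⟨hx1, hx2⟩
          by_contra hne
          exact hx2 ⟨hx1, hne⟩
      have hopen : IsOpen ({a} : Set Ω) := by
        rw [hsingle]
        exact (hA.inter hV).sdiff (hAinf.diff : ((A ∩ V) \ {a}).Finite).isClosed
      refine ⟨{a}, V \ {a}, hopen, singleton_nonempty a, singleton_subset_iff.2 ha,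
        hV.sdiff isClosed_singleton, hVinf.diff (finite_singleton a), diff_subset, ?_⟩
      exact disjoint_singleton_left.2 (fun hx => hx.2 rfl)
  -- Build a decreasing chain of infinite open sets and disjoint nonempty open pieces.
  let T := {V : Set Ω // IsOpen V ∧ V.Infinite}
  have next : ∀ V : T, ∃ p : Set Ω × T,
      IsOpen p.1 ∧ p.1.Nonempty ∧ p.1 ⊆ V.1 ∧ p.2.1 ⊆ V.1 ∧ Disjoint p.1 p.2.1 := by
    intro V
    obtain ⟨U, W, hUo, hUne, hUV, hWo, hWinf, hWV, hd⟩ := step V.1 V.2.1 V.2.2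
    exact ⟨(U, ⟨W, hWo, hWinf⟩), hUo, hUne, hUV, hWV, hd⟩
  choose nxt hno hnne hnUV hnWV hnd using next
  let V : ℕ → T := fun n => Nat.rec ⟨univ, isOpen_univ, infinite_univ⟩ (fun _ v => (nxt v).2) n
  let U : ℕ → Set Ω := fun n => (nxt (V n)).1
  have hVsucc : ∀ n, V (n + 1) = (nxt (V n)).2 := fun n => rfl
  have hUo : ∀ n, IsOpen (U n) := fun n => hno (V n)
  have hUne : ∀ n, (U n).Nonempty := fun n => hnne (V n)
  have hUV : ∀ n, U n ⊆ (V n).1 := fun n => hnUV (V n)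
  have hchain : ∀ m n, m ≤ n → (V n).1 ⊆ (V m).1 := by
    intro m n hmn
    induction n with
    | zero => rw [Nat.le_zero.mp hmn]
    | succ k ih =>
      rcases Nat.lt_or_ge m (k + 1) with hm | hm
      · exact (by rw [hVsucc]; exact hnWV (V k) : (V (k+1)).1 ⊆ (V k).1).trans
          (ih (Nat.lt_succ_iff.mp hm))
      · rw [Nat.le_antisymm hmn hm]
  have hdisj : ∀ m n, m ≠ n → Disjoint (U m) (U n) := by
    have key : ∀ m n, m < n → Disjoint (U m) (U n) := by
      intro m n hmn
      have h1 : U n ⊆ (V (m + 1)).1 := (hUV n).trans (hchain (m + 1) n hmn)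
      have h2 : Disjoint (U m) ((V (m + 1)).1) := by rw [hVsucc]; exact hnd (V m)
      exact h2.mono_right h1
    intro m n hmn
    rcases hmn.lt_or_gt with hlt | hlt
    · exact key m n hlt
    · exact (key n m hlt).symm
  -- Choose points and Urysohn functions.
  have hω : ∀ n, (U n).Nonempty := hUne
  let ω : ℕ → Ω := fun n => (hω n).some
  have hωU : ∀ n, ω n ∈ U n := fun n => (hω n).some_mem
  have hf : ∀ n, ∃ f : C(Ω, ℝ), EqOn f 0 (U n)ᶜ ∧ EqOn f 1 {ω n} ∧
      ∀ x, f x ∈ Icc (0 : ℝ) 1 := by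
    intro n
    exact exists_continuous_zero_one_of_isClosed (hUo n).isClosed_compl isClosed_singleton
      (by simpa [disjoint_compl_left_iff_subset] using singleton_subset_iff.2 (hωU n))
  choose f hf0 hf1 hf01 using hf
  -- f k vanishes off U k
  have hfz : ∀ k x, x ∉ U k → f k x = 0 := fun k x hx => hf0 k hx
  -- Partial sums
  let g : ℕ → C(Ω, ℝ) := fun n => ∑ k ∈ Finset.range (n + 1), f k
  have hg_apply : ∀ n x, g n x = ∑ k ∈ Finset.range (n + 1), f k x := by
    intro n x
    simp [g]
  have hg_mem : ∀ n x, g n x ∈ Icc (0 : ℝ) 1 := by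
    intro n x
    rw [hg_apply]
    constructor
    · exact Finset.sum_nonneg fun k _ => (hf01 k x).1
    · by_cases hx : ∃ j, x ∈ U j
      · obtain ⟨j, hj⟩ := hx
        have hz : ∀ k, k ≠ j → f k x = 0 := fun k hk =>
          hfz k x fun hxk => (hdisj k j hk).ne_of_mem hxk hj rfl
        by_cases hjmem : j ∈ Finset.range (n + 1)
        · rw [Finset.sum_eq_single_of_mem j hjmem (fun k _ hk => hz k hk)]
          exact (hf01 j x).2
        · rw [Finset.sum_eq_zero (fun k hk => hz k (fun hkj => hjmem (hkj ▸ hk)))]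
          exact zero_le_one
      · rw [Finset.sum_eq_zero (fun k _ => hfz k x (fun hxk => hx ⟨k, hxk⟩))]
        exact zero_le_one
  have hgnorm : ∀ n, ‖g n‖ ≤ 1 := by
    intro n
    rw [ContinuousMap.norm_le _ zero_le_one]
    intro x
    rw [Real.norm_eq_abs, abs_le]
    exact ⟨le_trans (by norm_num) (hg_mem n x).1, (hg_mem n x).2⟩
  obtain ⟨φ, hφ, x₀, hx₀⟩ := h g ⟨1, hgnorm⟩
  -- pointwise limits via evaluation functionals
  have heval : ∀ p : Ω, Tendsto (fun j => g (φ j) p) atTop (𝓝 (x₀ p)) := by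
    intro p
    exact hx₀ (ContinuousMap.evalCLM ℝ p)
  -- x₀ = 1 at each ω k
  have hval : ∀ k, x₀ (ω k) = 1 := by
    intro k
    have h1 : ∀ n, k ≤ n → g n (ω k) = 1 := by
      intro n hkn
      rw [hg_apply]
      rw [Finset.sum_eq_single_of_mem k (Finset.mem_range.2 (Nat.lt_succ_of_le hkn))
        (fun j _ hj => hfz j (ω k) fun hx => (hdisj k j (Ne.symm hj)).ne_of_mem (hωU k) hx rfl)]
      exact hf1 k rfl
    have h2 : Tendsto (fun j => g (φ j) (ω k)) atTop (𝓝 1) := by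
      apply tendsto_const_nhds.congr'
      filter_upwards [eventually_ge_atTop k] with j hj
      exact (h1 (φ j) (hj.trans (hφ.le_apply))).symm
    exact tendsto_nhds_unique (heval (ω k)) h2
  -- cluster point of the ω sequence
  have hmap : Filter.map ω atTop ≤ 𝓟 (univ : Set Ω) := le_principal_iff.2 univ_mem
  obtain ⟨p, -, hp⟩ := isCompact_univ.exists_mapClusterPt (u := ω) hmap
  -- p is outside every U m
  have hpU : ∀ m, p ∉ U m := by
    intro m hpm
    have hfreq : ∃ᶠ k in atTop, ω k ∈ U m :=
      (mapClusterPt_iff_frequently.mp hp) (U m) ((hUo m).mem_nhds hpm)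
    obtain ⟨k, hk1, hk2⟩ := (hfreq.and_eventually (eventually_gt_atTop m)).exists
    exact (hdisj k m (Nat.ne_of_gt hk2)).ne_of_mem (hωU k) hk1 rfl
  -- x₀ p = 0
  have hx0p : x₀ p = 0 := by
    have h1 : ∀ n, g n p = 0 := by
      intro n
      rw [hg_apply]
      exact Finset.sum_eq_zero fun k _ => hfz k p (hpU k)
    have h2 : Tendsto (fun j => g (φ j) p) atTop (𝓝 0) := by
      simp only [h1]
      exact (tendsto_const_nhds : Tendsto (fun _ : ℕ => (0:ℝ)) atTop (𝓝 0))
    exact tendsto_nhds_unique (heval p) h2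
  -- x₀ p = 1 by continuity and cluster point
  have hx1p : x₀ p = 1 := by
    have hc : MapClusterPt (x₀ p) atTop (x₀ ∘ ω) :=
      hp.continuousAt_comp x₀.continuous.continuousAt
    have ht : Tendsto (x₀ ∘ ω) atTop (𝓝 1) := by
      simp only [Function.comp_def, hval]
      exact tendsto_const_nhds
    exact eq_of_nhds_neBot (ClusterPt.mono hc ht)
  rw [hx0p] at hx1p
  exact zero_ne_one hx1p
end

section
/- In an infinite-dimensional normed real vector space, the closure of the unit sphere in the weak topology equals the closed unit ball. -/
open Filter Set

/-- In an infinite-dimensional space, finitely many functionals have a common nonzero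
kernel element. -/
lemma aux_ker (X : Type*) [NormedAddCommGroup X] [NormedSpace ℝ X]
    (h : ¬ FiniteDimensional ℝ X) (I : Set (X →L[ℝ] ℝ)) (hI : I.Finite) :
    ∃ v : X, v ≠ 0 ∧ ∀ f ∈ I, f v = 0 := by
  haveI : Finite I := hI
  haveI : Fintype I := hI.fintype
  let Φ : X →ₗ[ℝ] (I → ℝ) := LinearMap.pi fun f => (f : X →L[ℝ] ℝ).toLinearMap
  by_cases hinj : Function.Injective Φ
  · exact absurd (FiniteDimensional.of_injective Φ hinj) h
  · rw [← LinearMap.ker_eq_bot] at hinj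
    obtain ⟨v, hv, hv0⟩ := Submodule.exists_mem_ne_zero_of_ne_bot hinj
    refine ⟨v, hv0, fun f hf => ?_⟩
    have := LinearMap.mem_ker.mp hv
    have := congrFun this ⟨f, hf⟩
    simpa [Φ] using this

/-- Every norm-closed-ball point is in the weak closure of the sphere. -/
lemma aux_mem (X : Type*) [NormedAddCommGroup X] [NormedSpace ℝ X]
    (h : ¬ FiniteDimensional ℝ X) {x : X} (hx : ‖x‖ ≤ 1) :
    toWeakSpace ℝ X x ∈ closure (toWeakSpace ℝ X '' Metric.sphere (0 : X) 1) := by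
  rw [mem_closure_iff_nhds]
  intro s hs
  erw [nhds_induced, Filter.mem_comap] at hs
  obtain ⟨t, ht, hts⟩ := hs
  rw [nhds_pi, Filter.mem_pi] at ht
  obtain ⟨I, hIfin, u, hu, hut⟩ := ht
  obtain ⟨v, hv0, hvI⟩ := aux_ker X h I hIfin
  have hvpos : (0:ℝ) < ‖v‖ := norm_pos_iff.mpr hv0
  -- IVT to find c with ‖x + c • v‖ = 1
  set g : ℝ → ℝ := fun c => ‖x + c • v‖ with hg
  have hgc : Continuous g := (continuous_const.add (continuous_id.smul continuous_const)).norm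
  set b : ℝ := (1 + ‖x‖) / ‖v‖ with hb
  have hb0 : 0 ≤ b := div_nonneg (by positivity) hvpos.le
  have hgb : 1 ≤ g b := by
    have : b * ‖v‖ - ‖x‖ ≤ ‖x + b • v‖ := by
      have := norm_sub_norm_le (b • v) (-x)
      simp only [norm_smul, Real.norm_eq_abs, abs_of_nonneg hb0, norm_neg, sub_neg_eq_add] at this
      calc b * ‖v‖ - ‖x‖ ≤ ‖b • v + x‖ := this
        _ = ‖x + b • v‖ := by rw [add_comm]
    have hbv : b * ‖v‖ = 1 + ‖x‖ := div_mul_cancel₀ _ hvpos.ne'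
    simp only [hg]
    linarith
  have hg0 : g 0 ≤ 1 := by simpa [hg] using hx
  have h1 : (1:ℝ) ∈ Set.Icc (g 0) (g b) := ⟨hg0, hgb⟩
  obtain ⟨c, -, hc⟩ := intermediate_value_Icc hb0 hgc.continuousOn h1
  -- y is on the sphere and agrees with x on all f ∈ I
  refine ⟨toWeakSpace ℝ X (x + c • v), hts ?_, ⟨x + c • v, ?_, rfl⟩⟩
  · apply hut
    intro f hf
    have htw : ∀ z : X, toWeakSpace ℝ X z = z := fun z => rfl
    have : f x ∈ u f := by
      have := mem_of_mem_nhds (hu f)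
      simpa [topDualPairing, htw] using this
    simpa [topDualPairing, htw, map_add, map_smul, hvI f hf] using this
  · simpa [Metric.mem_sphere, dist_zero_right] using hc

theorem stmt_1 (X : Type*) [NormedAddCommGroup X] [NormedSpace ℝ X]
    (h : ¬ FiniteDimensional ℝ X) :
    closure (toWeakSpace ℝ X '' Metric.sphere (0 : X) 1)
      = toWeakSpace ℝ X '' Metric.closedBall (0 : X) 1 := by
  apply le_antisymm
  · have hconv : Convex ℝ (Metric.closedBall (0:X) 1) := convex_closedBall 0 1
    have hcl : closure (toWeakSpace ℝ X '' Metric.closedBall (0:X) 1)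
        = toWeakSpace ℝ X '' Metric.closedBall (0:X) 1 := by
      conv_rhs => rw [show Metric.closedBall (0:X) 1 = closure (Metric.closedBall (0:X) 1) from
        Metric.isClosed_closedBall.closure_eq.symm]
      rw [← hconv.toWeakSpace_closure ℝ, Metric.isClosed_closedBall.closure_eq]
    calc closure (toWeakSpace ℝ X '' Metric.sphere (0 : X) 1)
        ≤ closure (toWeakSpace ℝ X '' Metric.closedBall (0:X) 1) :=
          closure_mono (Set.image_mono Metric.sphere_subset_closedBall)
      _ = toWeakSpace ℝ X '' Metric.closedBall (0:X) 1 := hcl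
  · rintro _ ⟨x, hx, rfl⟩
    exact aux_mem X h (by simpa [Metric.mem_closedBall, dist_zero_right] using hx)
end

section
/- If Ω is a compact Hausdorff space such that the Banach space C(Ω) of continuous real-valued functions on Ω is reflexive, then Ω is finite. -/
open Filter Topology Set NormedSpace Metric

theorem stmt_2 (Ω : Type*) [TopologicalSpace Ω] [CompactSpace Ω] [T2Space Ω]
    (h : Function.Surjective (NormedSpace.inclusionInDoubleDual ℝ C(Ω, ℝ))) :
    Finite Ω := by
  by_contra hfin
  -- There is a non-isolated point x₀.
  have : ¬ ∀ x : Ω, IsOpen ({x} : Set Ω) := by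
    intro hall
    haveI : DiscreteTopology Ω := discreteTopology_iff_isOpen_singleton.mpr hall
    exact hfin finite_of_compact_of_discrete
  push_neg at this
  obtain ⟨x₀, hx₀⟩ := this
  -- Index type: open neighborhoods of x₀
  let ι := {U : Set Ω // IsOpen U ∧ x₀ ∈ U}
  haveI : Nonempty ι := ⟨⟨Set.univ, isOpen_univ, mem_univ _⟩⟩
  -- bump functions supported in U
  let S : ι → Set C(Ω, ℝ) := fun U =>
    {f | ‖f‖ ≤ 1 ∧ f x₀ = 1 ∧ ∀ x ∉ U.1, f x = 0}
  have hSne : ∀ U : ι, (S U).Nonempty := by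
    intro U
    obtain ⟨f, hf0, hf1, hf01⟩ := exists_continuous_zero_one_of_isClosed
      (isClosed_compl_iff.mpr U.2.1) (isClosed_singleton (x := x₀))
      (by simp only [Set.disjoint_left, Set.mem_compl_iff, Set.mem_singleton_iff]
          rintro a ha rfl; exact ha U.2.2)
    refine ⟨f, ?_, hf1 rfl, fun x hx => hf0 hx⟩
    refine (ContinuousMap.norm_le _ zero_le_one).mpr fun x => ?_
    obtain ⟨h0x, h1x⟩ := hf01 x
    rw [Real.norm_eq_abs, abs_le]
    exact ⟨by linarith, h1x⟩
  -- the filter of "shrinking bump functions"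
  let F : Filter C(Ω, ℝ) := ⨅ U : ι, 𝓟 (S U)
  have hdir : Directed (· ≥ ·) fun U : ι => (𝓟 (S U) : Filter C(Ω, ℝ)) := by
    intro U V
    refine ⟨⟨U.1 ∩ V.1, U.2.1.inter V.2.1, ⟨U.2.2, V.2.2⟩⟩, ?_, ?_⟩
    · exact principal_mono.mpr fun f hf =>
        ⟨hf.1, hf.2.1, fun x hx => hf.2.2 x fun hm => hx hm.1⟩
    · exact principal_mono.mpr fun f hf =>
        ⟨hf.1, hf.2.1, fun x hx => hf.2.2 x fun hm => hx hm.2⟩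
  haveI hFne : F.NeBot := iInf_neBot_of_directed' hdir
    (fun U => principal_neBot_iff.mpr (hSne U))
  have hFleS : ∀ U : ι, F ≤ 𝓟 (S U) := fun U => iInf_le _ U
  -- push into the weak-star dual of the dual
  let J := NormedSpace.inclusionInDoubleDual ℝ C(Ω, ℝ)
  letI : SeminormedAddCommGroup (StrongDual ℝ (StrongDual ℝ C(Ω, ℝ))) :=
    ContinuousLinearMap.toSeminormedAddCommGroup (E := StrongDual ℝ C(Ω, ℝ)) (F := ℝ)
      (σ₁₂ := RingHom.id ℝ)
  let Φ : C(Ω, ℝ) → WeakDual ℝ (StrongDual ℝ C(Ω, ℝ)) := fun f => StrongDual.toWeakDual (J f)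
  let K : Set (WeakDual ℝ (StrongDual ℝ C(Ω, ℝ))) := WeakDual.toStrongDual ⁻¹' closedBall 0 1
  have hK : IsCompact K := WeakDual.isCompact_closedBall (𝕜 := ℝ) (E := StrongDual ℝ C(Ω, ℝ)) 0 1
  have hmapleK : Filter.map Φ F ≤ 𝓟 K := by
    refine le_trans (map_mono (hFleS ⟨Set.univ, isOpen_univ, mem_univ _⟩)) ?_
    rw [map_principal]
    refine principal_mono.mpr ?_
    rintro - ⟨f, hf, rfl⟩
    simp only [K, Set.mem_preimage, mem_closedBall, dist_zero_right]
    calc ‖WeakDual.toStrongDual (Φ f)‖ = ‖J f‖ := rfl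
      _ ≤ ‖f‖ := double_dual_bound ℝ C(Ω, ℝ) f
      _ ≤ 1 := hf.1
  obtain ⟨F₀, hF₀K, hcl⟩ := hK.exists_clusterPt hmapleK
  obtain ⟨g, hg⟩ := h (WeakDual.toStrongDual F₀)
  -- key: cluster points of pointwise evaluations
  have key : ∀ x : Ω, ClusterPt (g x) (Filter.map (fun f : C(Ω, ℝ) => f x) F) := by
    intro x
    have hev : ClusterPt (F₀ (ContinuousMap.evalCLM ℝ x))
        (Filter.map (fun G : WeakDual ℝ (StrongDual ℝ C(Ω, ℝ)) => G (ContinuousMap.evalCLM ℝ x))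
          (Filter.map Φ F)) :=
      hcl.map ((WeakDual.eval_continuous _).continuousAt) tendsto_map
    rw [Filter.map_map] at hev
    have heq : F₀ (ContinuousMap.evalCLM ℝ x) = g x := by
      have : F₀ (ContinuousMap.evalCLM ℝ x)
          = WeakDual.toStrongDual F₀ (ContinuousMap.evalCLM ℝ x) := rfl
      rw [this, ← hg]
      rfl
    have hfun : ((fun G : WeakDual ℝ (StrongDual ℝ C(Ω, ℝ)) => G (ContinuousMap.evalCLM ℝ x)) ∘ Φ)
        = fun f : C(Ω, ℝ) => f x := rfl
    rwa [heq, hfun] at hev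
  -- g x = 0 for x ≠ x₀
  have hg0 : ∀ x : Ω, x ≠ x₀ → g x = 0 := by
    intro x hx
    have hU : x₀ ∈ ({x}ᶜ : Set Ω) := by simp [Ne.symm hx]
    have hle : Filter.map (fun f : C(Ω, ℝ) => f x) F ≤ 𝓟 {(0 : ℝ)} := by
      refine le_trans (map_mono (hFleS ⟨{x}ᶜ, isOpen_compl_singleton, hU⟩)) ?_
      rw [map_principal]
      refine principal_mono.mpr ?_
      rintro - ⟨f, hf, rfl⟩
      exact hf.2.2 x (by simp)
    have := (key x).mono hle
    have := mem_closure_iff_clusterPt.mpr this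
    rwa [closure_singleton, Set.mem_singleton_iff] at this
  -- g x₀ = 1
  have hg1 : g x₀ = 1 := by
    have hle : Filter.map (fun f : C(Ω, ℝ) => f x₀) F ≤ 𝓟 {(1 : ℝ)} := by
      refine le_trans (map_mono (hFleS ⟨Set.univ, isOpen_univ, mem_univ _⟩)) ?_
      rw [map_principal]
      refine principal_mono.mpr ?_
      rintro - ⟨f, hf, rfl⟩
      exact hf.2.1
    have := (key x₀).mono hle
    have := mem_closure_iff_clusterPt.mpr this
    rwa [closure_singleton, Set.mem_singleton_iff] at this
  -- so {x₀} is open, contradiction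
  apply hx₀
  have : ({x₀} : Set Ω) = (fun x => g x) ⁻¹' Set.Ioi (1/2 : ℝ) := by
    ext x
    simp only [Set.mem_singleton_iff, Set.mem_preimage, Set.mem_Ioi]
    constructor
    · rintro rfl; rw [hg1]; norm_num
    · intro hgx
      by_contra hne
      rw [hg0 x hne] at hgx
      norm_num at hgx
  rw [this]
  exact isOpen_Ioi.preimage g.continuous
end

section
/- If the closed unit ball of a Banach space X is compact in the weak topology, then X is reflexive. -/
open NormedSpace Set

/-- Every continuous linear functional on the weak-* dual is evaluation at a point. -/
lemma weakDual_dual_eval {E : Type*} [NormedAddCommGroup E] [NormedSpace ℝ E]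
    (φ : WeakDual ℝ E →L[ℝ] ℝ) : ∃ f : E, ∀ Φ : WeakDual ℝ E, φ Φ = Φ f := by
  have : Nonempty E := ⟨0⟩
  have hp := (topDualPairing ℝ E).weakBilin_withSeminorms
  set q : Seminorm ℝ (WeakDual ℝ E) := (normSeminorm ℝ ℝ).comp (φ : WeakDual ℝ E →ₗ[ℝ] ℝ) with hq
  have hqc : Continuous q := by
    show Continuous fun x => ‖φ x‖
    exact φ.continuous.norm
  obtain ⟨s, C, hC0, hCb⟩ := Seminorm.bound_of_continuous hp q hqc
  set L : s → WeakDual ℝ E →ₗ[ℝ] ℝ := fun y => (topDualPairing ℝ E).flip (y : E) with hL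
  have hker : ⨅ i, LinearMap.ker (L i) ≤ LinearMap.ker (φ : WeakDual ℝ E →ₗ[ℝ] ℝ) := by
    intro Φ hΦ
    simp only [Submodule.mem_iInf, LinearMap.mem_ker] at hΦ
    have hsup : (s.sup (topDualPairing ℝ E).toSeminormFamily) Φ ≤ 0 := by
      refine Seminorm.finset_sup_apply_le le_rfl fun y hy => ?_
      have h0 : (topDualPairing ℝ E) Φ y = 0 := hΦ ⟨y, hy⟩
      change ‖(topDualPairing ℝ E) Φ y‖ ≤ 0
      rw [h0, norm_zero]
    have := hCb Φ
    simp only [hq, Seminorm.comp_apply, Seminorm.smul_apply] at this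
    have hle : ‖φ Φ‖ ≤ 0 := le_trans this (by
      have : (C : ℝ) • (s.sup (topDualPairing ℝ E).toSeminormFamily) Φ ≤ (C : ℝ) • 0 := by
        exact smul_le_smul_of_nonneg_left hsup C.coe_nonneg
      exact le_of_le_of_eq this (smul_zero _))
    simpa [LinearMap.mem_ker] using norm_le_zero_iff.mp hle
  have hmem := mem_span_of_iInf_ker_le_ker hker
  obtain ⟨c, hc⟩ := (Finsupp.mem_span_range_iff_exists_finsupp).mp hmem
  refine ⟨c.sum fun i a => a • (i : E), fun Φ => ?_⟩
  have := congrArg (fun K => K Φ) hc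
  simp only [Finsupp.sum, LinearMap.coe_sum, Finset.sum_apply, LinearMap.smul_apply,
    LinearMap.coe_coe] at this ⊢
  rw [ContinuousLinearMap.coe_coe] at this
  rw [← this, map_sum]
  refine Finset.sum_congr rfl fun i _ => ?_
  rw [map_smul]
  rfl

theorem stmt_13 (X : Type*) [NormedAddCommGroup X] [NormedSpace ℝ X] [CompleteSpace X]
    (h : IsCompact (toWeakSpace ℝ X '' Metric.closedBall (0 : X) 1)) :
    Function.Surjective (NormedSpace.inclusionInDoubleDual ℝ X) := by
  set J := NormedSpace.inclusionInDoubleDual ℝ X with hJ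
  have key : ∀ z : StrongDual ℝ (StrongDual ℝ X), ‖z‖ ≤ 1 → ∃ x, J x = z := by
    intro z hz
    -- the map from the weak space into the weak-* double dual
    set g : WeakSpace ℝ X → WeakDual ℝ (StrongDual ℝ X) :=
      fun w => J ((toWeakSpace ℝ X).symm w) with hg
    have hgc : Continuous g := by
      refine WeakBilin.continuous_of_continuous_eval _ fun f => ?_
      exact WeakBilin.eval_continuous (topDualPairing ℝ X).flip f
    set K : Set (WeakDual ℝ (StrongDual ℝ X)) := g '' (toWeakSpace ℝ X '' Metric.closedBall (0 : X) 1)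
      with hK
    have hKc : IsCompact K := h.image hgc
    have hKcl : IsClosed K := hKc.isClosed
    have hKim : K = (fun x : X => (J x : WeakDual ℝ (StrongDual ℝ X))) '' Metric.closedBall (0 : X) 1 := by
      rw [hK, Set.image_image]
      rfl
    have hKconv : Convex ℝ K := by
      rw [hKim]
      exact (convex_closedBall (0 : X) 1).linear_image
        (J.toLinearMap : X →ₗ[ℝ] WeakDual ℝ (StrongDual ℝ X))
    by_contra hsurj
    have hzK : (z : WeakDual ℝ (StrongDual ℝ X)) ∉ K := by
      intro hmem
      rw [hKim] at hmem
      obtain ⟨x, _, hx⟩ := hmem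
      exact hsurj ⟨x, hx⟩
    haveI : LocallyConvexSpace ℝ (WeakDual ℝ (StrongDual ℝ X)) := by
      letI : AddCommGroup (StrongDual ℝ (StrongDual ℝ X)) := ContinuousLinearMap.addCommGroup
      exact (topDualPairing ℝ (StrongDual ℝ X)).weakBilin_withSeminorms.toLocallyConvexSpace
    obtain ⟨φ, u, hu, hzphi⟩ := geometric_hahn_banach_closed_point hKconv hKcl hzK
    obtain ⟨f, hf⟩ := weakDual_dual_eval φ
    have hball : ∀ x : X, ‖x‖ ≤ 1 → f x < u := by
      intro x hx
      have hxK : (J x : WeakDual ℝ (StrongDual ℝ X)) ∈ K := by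
        rw [hKim]; exact ⟨x, by simpa [Metric.mem_closedBall, dist_zero_right] using hx, rfl⟩
      have := hu _ hxK
      exact lt_of_eq_of_lt (hf (J x : WeakDual ℝ (StrongDual ℝ X))).symm this
    have hu0 : 0 < u := by simpa using hball 0 (by simp)
    have hnorm : ‖f‖ ≤ u := by
      refine ContinuousLinearMap.opNorm_le_of_unit_norm hu0.le fun x hx => ?_
      have h1 := hball x hx.le
      have h2 := hball (-x) (by simp [hx.le])
      rw [map_neg] at h2
      rw [Real.norm_eq_abs, abs_le]
      constructor <;> linarith
    have hle : φ (z : WeakDual ℝ (StrongDual ℝ X)) ≤ u := by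
      refine (hf _).trans_le ?_
      calc (z : StrongDual ℝ (StrongDual ℝ X)) f ≤ ‖z f‖ := le_abs_self _
        _ ≤ ‖z‖ * ‖f‖ := z.le_opNorm f
        _ ≤ 1 * u := by
            exact mul_le_mul hz hnorm (norm_nonneg _) zero_le_one
        _ = u := one_mul u
    exact absurd hzphi (not_lt.mpr hle)
  intro y
  rcases eq_or_ne y 0 with rfl | hy
  · exact ⟨0, map_zero J⟩
  · have hn : ‖y‖ ≠ 0 := fun h0 => hy ((ContinuousLinearMap.opNorm_zero_iff y).mp h0)
    obtain ⟨x, hx⟩ := key (‖y‖⁻¹ • y)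
      ((ContinuousLinearMap.opNorm_smul_le _ _).trans (by
        rw [norm_inv, Real.norm_eq_abs, abs_of_nonneg (norm_nonneg y), inv_mul_cancel₀ hn]))
    exact ⟨‖y‖ • x, by rw [map_smul, hx, smul_inv_smul₀ hn]⟩
end

section
/- If every sequence in the closed unit ball of a Banach space X has a weakly convergent subsequence (with limit in X), then the closed unit ball of X is weakly compact. -/
open Filter Topology Metric Set NormedSpace

section aux
variable {X : Type*} [NormedAddCommGroup X] [NormedSpace ℝ X]

noncomputable instance instNACGdual : NormedAddCommGroup (StrongDual ℝ X) := ContinuousLinearMap.toNormedAddCommGroup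
noncomputable instance instNSdual : NormedSpace ℝ (StrongDual ℝ X) := ContinuousLinearMap.toNormedSpace

-- Lemma A: near-norming functional
lemma ES_exists_norming (y : StrongDual ℝ (StrongDual ℝ X)) {c : ℝ} (hc : c < ‖y‖) :
    ∃ f : StrongDual ℝ X, ‖f‖ ≤ 1 ∧ c < |y f| := by
  by_contra hcon
  push_neg at hcon
  rcases lt_or_ge c 0 with h0 | h0
  · exact absurd (hcon 0 (by simp)) (by simp; linarith)
  · refine absurd (y.opNorm_le_bound h0 fun f => ?_) (not_le.2 hc)
    rcases eq_or_ne f 0 with rfl | hf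
    · simp
    · have hfn : ‖(‖f‖)⁻¹ • f‖ ≤ 1 := by
        rw [norm_smul, norm_inv, norm_norm]
        rw [inv_mul_le_iff₀ (norm_pos_iff.2 hf)]; simp
      have := hcon _ hfn
      rw [map_smul, smul_eq_mul, abs_mul, abs_inv, abs_norm] at this
      rw [← Real.norm_eq_abs] at this
      calc ‖y f‖ = ‖f‖ * ((‖f‖)⁻¹ * ‖y f‖) := by
            field_simp
        _ ≤ ‖f‖ * c := by
            refine mul_le_mul_of_nonneg_left ?_ (norm_nonneg f)
            simpa using this
        _ = c * ‖f‖ := mul_comm _ _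

-- Lemma B: finite 1/2-norming set for a finite-dimensional subspace of the bidual
lemma ES_norming_finset (E : Submodule ℝ (StrongDual ℝ (StrongDual ℝ X))) [FiniteDimensional ℝ E] :
    ∃ T : Finset (StrongDual ℝ X), (∀ f ∈ T, ‖f‖ ≤ 1) ∧
      ∀ y ∈ E, ∃ f ∈ T, ‖y‖ ≤ 2 * |y f| := by
  classical
  haveI : ProperSpace E := FiniteDimensional.proper ℝ E
  have hcs : IsCompact (sphere (0 : E) 1) := isCompact_sphere 0 1
  have hcover : sphere (0 : E) 1 ⊆ ⋃ u ∈ sphere (0 : E) 1, ball u 4⁻¹ := by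
    intro u hu
    exact Set.mem_biUnion hu (mem_ball_self (by norm_num))
  obtain ⟨t, hts, htf, htc⟩ := hcs.elim_finite_subcover_image
    (fun u _ => isOpen_ball) hcover
  -- choice of functionals
  let g : E → StrongDual ℝ X := fun u =>
    if h : (3:ℝ)/4 < ‖(u : StrongDual ℝ (StrongDual ℝ X))‖ then (ES_exists_norming _ h).choose else 0
  have hg : ∀ u ∈ sphere (0 : E) 1, ‖g u‖ ≤ 1 ∧ (3:ℝ)/4 < |(u : StrongDual ℝ (StrongDual ℝ X)) (g u)| := by
    intro u hu
    have hn : ‖(u : StrongDual ℝ (StrongDual ℝ X))‖ = 1 := by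
      rw [Submodule.norm_coe]; simpa [Subtype.dist_eq, dist_eq_norm] using hu
    have h : (3:ℝ)/4 < ‖(u : StrongDual ℝ (StrongDual ℝ X))‖ := by rw [hn]; norm_num
    have := (ES_exists_norming _ h).choose_spec
    simpa only [g, dif_pos h] using this
  refine ⟨insert 0 (htf.toFinset.image g), ?_, ?_⟩
  · intro f hf
    rcases Finset.mem_insert.1 hf with rfl | hf
    · simp
    · rcases Finset.mem_image.1 hf with ⟨u, hu, rfl⟩
      exact (hg u (hts (htf.mem_toFinset.1 hu))).1
  · intro y hy
    rcases eq_or_ne y 0 with rfl | hy0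
    · exact ⟨0, Finset.mem_insert_self _ _, by simp⟩
    · have hyn : (0:ℝ) < ‖y‖ :=
        lt_of_le_of_ne (norm_nonneg y)
          (fun h => hy0 ((ContinuousLinearMap.opNorm_zero_iff y).1 h.symm))
      set m : E := ⟨y, hy⟩ with hm_def
      have hmk : ‖m‖ = ‖y‖ := (Submodule.norm_coe (⟨y, hy⟩ : E)).symm ▸ rfl
      set u : E := ‖y‖⁻¹ • m with hu_def
      have hucoe : (u : StrongDual ℝ (StrongDual ℝ X)) = ‖y‖⁻¹ • y := rfl
      clear_value m
      have hu : u ∈ sphere (0 : E) 1 := by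
        rw [mem_sphere, Subtype.dist_eq, dist_eq_norm, Submodule.coe_zero, sub_zero]
        rw [hucoe,
          norm_smul, norm_inv, norm_norm]
        exact inv_mul_cancel₀ hyn.ne'
      clear_value u
      obtain ⟨v, hv, huv⟩ := Set.mem_iUnion₂.1 (htc hu)
      obtain ⟨hgv1, hgv2⟩ := hg v (hts hv)
      refine ⟨g v, Finset.mem_insert_of_mem
        (Finset.mem_image_of_mem g (htf.mem_toFinset.2 hv)), ?_⟩
      have hdist : ‖((u - v : E) : StrongDual ℝ (StrongDual ℝ X))‖ < 4⁻¹ := by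
        rw [Submodule.norm_coe]
        simpa [dist_eq_norm] using mem_ball_iff_norm.1 huv
      have h1 : |((u - v : E) : StrongDual ℝ (StrongDual ℝ X)) (g v)| ≤ 4⁻¹ := by
        calc |((u - v : E) : StrongDual ℝ (StrongDual ℝ X)) (g v)|
            ≤ ‖((u - v : E) : StrongDual ℝ (StrongDual ℝ X))‖ * ‖g v‖ :=
              ((u - v : E) : StrongDual ℝ (StrongDual ℝ X)).le_opNorm (g v)
          _ ≤ 4⁻¹ * 1 := by
              apply mul_le_mul hdist.le hgv1 (norm_nonneg _) (by norm_num)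
          _ = 4⁻¹ := mul_one _
      have hc : ((u - v : E) : StrongDual ℝ (StrongDual ℝ X))
          = (u : StrongDual ℝ (StrongDual ℝ X)) - (v : StrongDual ℝ (StrongDual ℝ X)) :=
        AddSubgroupClass.coe_sub u v
      have hsplit : ((u : StrongDual ℝ (StrongDual ℝ X))) (g v)
          = (v : StrongDual ℝ (StrongDual ℝ X)) (g v) + ((u - v : E) : StrongDual ℝ (StrongDual ℝ X)) (g v) := by
        rw [hc, ContinuousLinearMap.sub_apply]
        ring
      have h2 : (1:ℝ)/2 < |(u : StrongDual ℝ (StrongDual ℝ X)) (g v)| := by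
        rw [hsplit]
        have := abs_sub_abs_le_abs_sub ((v : StrongDual ℝ (StrongDual ℝ X)) (g v))
          (-(((u - v : E) : StrongDual ℝ (StrongDual ℝ X)) (g v)))
        rw [abs_neg, sub_neg_eq_add] at this
        linarith
      have heq : |y (g v)| = ‖y‖ * |(u : StrongDual ℝ (StrongDual ℝ X)) (g v)| := by
        rw [hucoe]
        simp only [ContinuousLinearMap.smul_apply, smul_eq_mul, abs_mul, abs_inv, abs_norm]
        field_simp
      have key := mul_le_mul_of_nonneg_left h2.le (norm_nonneg y)
      rw [heq]
      linarith [key]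

variable (X) in
/-- The canonical embedding of `X` into its bidual, regarded as a map into the weak-star dual. -/
noncomputable def ESJ : X → WeakDual ℝ (StrongDual ℝ X) :=
  fun x => StrongDual.toWeakDual ((inclusionInDoubleDualLi ℝ (E := X)) x)

lemma ESJ_apply (x : X) (f : StrongDual ℝ X) : ESJ X x f = f x := rfl

lemma ESJ_toNormed (x : X) :
    (WeakDual.toStrongDual (ESJ X x) : StrongDual ℝ (StrongDual ℝ X)) = (inclusionInDoubleDualLi ℝ (E := X)) x := rfl

-- Lemma C: weak-star approximation of a point in the closure of the image of the ball
lemma ES_approx {F : WeakDual ℝ (StrongDual ℝ X)}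
    (hF : F ∈ closure (ESJ X '' closedBall (0:X) 1))
    (T : Finset (StrongDual ℝ X)) {ε : ℝ} (hε : 0 < ε) :
    ∃ x ∈ closedBall (0:X) 1, ∀ f ∈ T, |F f - f x| < ε := by
  have hopen : IsOpen {G : WeakDual ℝ (StrongDual ℝ X) | ∀ f ∈ T, |F f - G f| < ε} := by
    have heq : {G : WeakDual ℝ (StrongDual ℝ X) | ∀ f ∈ T, |F f - G f| < ε}
        = ⋂ f ∈ T, (fun G : WeakDual ℝ (StrongDual ℝ X) => |F f - G f|) ⁻¹' (Iio ε) := by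
      ext G; simp
    rw [heq]
    exact isOpen_biInter_finset fun f _ =>
      isOpen_Iio.preimage ((continuous_const.sub (WeakDual.eval_continuous f)).abs)
  have hFmem : F ∈ {G : WeakDual ℝ (StrongDual ℝ X) | ∀ f ∈ T, |F f - G f| < ε} := by
    intro f _; simpa using hε
  obtain ⟨G, hGU, hGS⟩ := mem_closure_iff.1 hF _ hopen hFmem
  obtain ⟨x, hx, rfl⟩ := hGS
  exact ⟨x, hx, fun f hf => by simpa [ESJ_apply] using hGU f hf⟩

-- The inductive step of Whitley's construction
lemma ES_step {F : WeakDual ℝ (StrongDual ℝ X)}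
    (hF : F ∈ closure (ESJ X '' closedBall (0:X) 1))
    (L : List X) (T : Finset (StrongDual ℝ X)) (hT : ∀ f ∈ T, ‖f‖ ≤ 1) :
    ∃ p : X × Finset (StrongDual ℝ X),
      p.1 ∈ closedBall (0:X) 1 ∧ T ⊆ p.2 ∧ (∀ f ∈ p.2, ‖f‖ ≤ 1) ∧
      (∀ y ∈ Submodule.span ℝ (insert (WeakDual.toStrongDual F : StrongDual ℝ (StrongDual ℝ X))
          ((fun z => ((inclusionInDoubleDualLi ℝ (E := X)) z : StrongDual ℝ (StrongDual ℝ X))) '' {z | z ∈ L})),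
        ∃ f ∈ p.2, ‖y‖ ≤ 2 * |y f|) ∧
      (∀ f ∈ p.2, |F f - f p.1| < 1 / (L.length + 1)) := by
  classical
  set s : Set (StrongDual ℝ (StrongDual ℝ X)) := insert (WeakDual.toStrongDual F : StrongDual ℝ (StrongDual ℝ X))
    ((fun z => ((inclusionInDoubleDualLi ℝ (E := X)) z : StrongDual ℝ (StrongDual ℝ X))) '' {z | z ∈ L}) with hs
  have hsfin : s.Finite := Set.Finite.insert _ (L.finite_toSet.image _)
  haveI : FiniteDimensional ℝ (Submodule.span ℝ s) := FiniteDimensional.span_of_finite ℝ hsfin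
  obtain ⟨T₀, hT₀1, hT₀2⟩ := ES_norming_finset (Submodule.span ℝ s)
  have hε : (0:ℝ) < 1 / (L.length + 1) := by positivity
  obtain ⟨x, hx, hxT⟩ := ES_approx hF (T ∪ T₀) hε
  refine ⟨(x, T ∪ T₀), hx, Finset.subset_union_left, ?_, ?_, ?_⟩
  · intro f hf
    rcases Finset.mem_union.1 hf with hf | hf
    · exact hT f hf
    · exact hT₀1 f hf
  · intro y hy
    obtain ⟨f, hf, hyf⟩ := hT₀2 y hy
    exact ⟨f, Finset.mem_union_right _ hf, hyf⟩
  · exact hxT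

lemma ES_closure_subset
    (h : ∀ x : ℕ → X, (∀ n, x n ∈ closedBall (0 : X) 1) →
      ∃ φ : ℕ → ℕ, StrictMono φ ∧ ∃ x₀ : X,
        ∀ ξ : X →L[ℝ] ℝ, Tendsto (fun k => ξ (x (φ k))) atTop (𝓝 (ξ x₀)))
    {F : WeakDual ℝ (StrongDual ℝ X)}
    (hF : F ∈ closure (ESJ X '' closedBall (0:X) 1)) :
    F ∈ ESJ X '' closedBall (0:X) 1 := by
  classical
  set J : X → StrongDual ℝ (StrongDual ℝ X) := fun z => (inclusionInDoubleDualLi ℝ (E := X)) z with hJ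
  set F' : StrongDual ℝ (StrongDual ℝ X) := WeakDual.toStrongDual F with hF'def
  set step : List X × Finset (StrongDual ℝ X) → X × Finset (StrongDual ℝ X) := fun q =>
    if hq : ∀ f ∈ q.2, ‖f‖ ≤ 1 then (ES_step hF q.1 q.2 hq).choose else (0, ∅) with hstepdef
  set P : ℕ → List X × Finset (StrongDual ℝ X) :=
    fun n => Nat.rec (([] : List X), (∅ : Finset (StrongDual ℝ X)))
      (fun _ q => ((step q).1 :: q.1, (step q).2)) n with hPdef
  set xs : ℕ → X := fun n => (step (P n)).1 with hxsdef
  set Ts : ℕ → Finset (StrongDual ℝ X) := fun n => (P n).2 with hTsdef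
  have hPsucc : ∀ n, P (n+1) = ((xs n) :: (P n).1, (step (P n)).2) := fun n => rfl
  -- all chosen functionals have norm at most 1
  have hnorm : ∀ n, ∀ f ∈ Ts n, ‖f‖ ≤ 1 := by
    intro n
    induction n with
    | zero => intro f hf; simp [Ts, hPdef] at hf
    | succ n ih =>
      have hstep : step (P n) = (ES_step hF (P n).1 (P n).2 ih).choose := dif_pos ih
      intro f hf
      have hf' : f ∈ (step (P n)).2 := hf
      rw [hstep] at hf'
      exact (ES_step hF (P n).1 (P n).2 ih).choose_spec.2.2.1 f hf'
  have hstepn : ∀ n, step (P n) = (ES_step hF (P n).1 (P n).2 (hnorm n)).choose :=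
    fun n => dif_pos (hnorm n)
  have hspec := fun n => (ES_step hF (P n).1 (P n).2 (hnorm n)).choose_spec
  have hlen : ∀ n, (P n).1.length = n := by
    intro n
    induction n with
    | zero => rfl
    | succ n ih => rw [hPsucc n]; simp [ih]
  have hxsB : ∀ n, xs n ∈ closedBall (0:X) 1 := by
    intro n
    rw [hxsdef]
    simp only []
    rw [hstepn n]
    exact (hspec n).1
  have hsub : ∀ n, Ts n ⊆ Ts (n+1) := by
    intro n
    have : Ts (n+1) = (step (P n)).2 := rfl
    rw [this, hstepn n]
    exact (hspec n).2.1
  have hmono : ∀ m n, m ≤ n → Ts m ⊆ Ts n := by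
    intro m n hmn
    induction hmn with
    | refl => exact Finset.Subset.refl _
    | step h ih => exact ih.trans (hsub _)
  have hsmall : ∀ n, ∀ f ∈ Ts (n+1), |F f - f (xs n)| < 1/(n+1 : ℝ) := by
    intro n f hf
    have hf' : f ∈ (step (P n)).2 := hf
    rw [hstepn n] at hf'
    have hcast : (1:ℝ)/(((P n).1.length : ℝ) + 1) = 1/((n:ℝ)+1) := by rw [hlen n]
    have hxseq : xs n = (ES_step hF (P n).1 (P n).2 (hnorm n)).choose.1 :=
      congrArg Prod.fst (hstepn n)
    rw [hxseq]
    exact lt_of_lt_of_eq ((hspec n).2.2.2.2 f hf') hcast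
  have hnorming : ∀ n, ∀ y ∈ Submodule.span ℝ (insert F' (J '' {z | z ∈ (P n).1})),
      ∃ f ∈ Ts (n+1), ‖y‖ ≤ 2 * |y f| := by
    intro n y hy
    obtain ⟨f, hf, hyf⟩ := (hspec n).2.2.2.1 y hy
    refine ⟨f, ?_, hyf⟩
    have : Ts (n+1) = (step (P n)).2 := rfl
    rw [this, hstepn n]
    exact hf
  have hxs_mem : ∀ i n, i < n → xs i ∈ (P n).1 := by
    intro i n
    induction n with
    | zero => omega
    | succ n ih =>
      intro hi
      rw [hPsucc n]
      rcases Nat.lt_succ_iff_lt_or_eq.1 hi with hi | rfl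
      · exact List.mem_cons_of_mem _ (ih hi)
      · exact List.mem_cons_self
  -- apply the hypothesis
  obtain ⟨φ, hφ, x₀, hx₀⟩ := h xs hxsB
  have hx₀B : x₀ ∈ closedBall (0:X) 1 := by
    rw [mem_closedBall_zero_iff]
    refine norm_le_dual_bound ℝ x₀ zero_le_one fun f => ?_
    rw [one_mul]
    refine le_of_tendsto ((hx₀ f).norm) (Eventually.of_forall fun k => ?_)
    calc ‖f (xs (φ k))‖ ≤ ‖f‖ * ‖xs (φ k)‖ := f.le_opNorm _
      _ ≤ ‖f‖ * 1 := by
          refine mul_le_mul_of_nonneg_left ?_ (norm_nonneg f)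
          exact mem_closedBall_zero_iff.1 (hxsB (φ k))
      _ = ‖f‖ := mul_one _
  -- Mazur: the weak limit is in the norm closure of the convex hull
  have hx₀C : x₀ ∈ closure (convexHull ℝ (Set.range xs)) := by
    by_contra hc
    obtain ⟨f, u, hfu, hux⟩ := geometric_hahn_banach_closed_point
      ((convex_convexHull ℝ _).closure) isClosed_closure hc
    have hle : ∀ k, f (xs (φ k)) ≤ u := fun k =>
      (hfu _ (subset_closure (subset_convexHull ℝ _ (Set.mem_range_self _)))).le
    have := le_of_tendsto (hx₀ f) (Eventually.of_forall hle)
    linarith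
  -- the relevant subspace
  set M : Submodule ℝ (StrongDual ℝ (StrongDual ℝ X)) :=
    Submodule.span ℝ (insert F' (Set.range (fun i => J (xs i)))) with hM
  have hJx₀ : J x₀ ∈ closure (M : Set (StrongDual ℝ (StrongDual ℝ X))) := by
    have hcont : Continuous J := (inclusionInDoubleDualLi ℝ (E := X)).continuous
    have h1 : J x₀ ∈ closure (J '' convexHull ℝ (Set.range xs)) :=
      image_closure_subset_closure_image hcont (Set.mem_image_of_mem J hx₀C)
    refine closure_mono ?_ h1
    intro w hw
    obtain ⟨z, hz, rfl⟩ := hw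
    have hz' : z ∈ Submodule.span ℝ (Set.range xs) := by
      have hsub' : convexHull ℝ (Set.range xs) ⊆ (Submodule.span ℝ (Set.range xs) : Set X) :=
        convexHull_min Submodule.subset_span (Submodule.span ℝ (Set.range xs)).convex
      exact hsub' hz
    have hmap : J z ∈ Submodule.map (inclusionInDoubleDualLi ℝ (E := X)).toLinearMap
        (Submodule.span ℝ (Set.range xs)) := Submodule.mem_map_of_mem hz'
    rw [Submodule.map_span] at hmap
    have hle : Submodule.span ℝ ((inclusionInDoubleDualLi ℝ (E := X)).toLinearMap ''
        Set.range xs) ≤ M := by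
      refine Submodule.span_le.2 ?_
      rintro w' ⟨z', ⟨i, rfl⟩, rfl⟩
      exact Submodule.subset_span (Set.mem_insert_of_mem _ ⟨i, rfl⟩)
    exact hle hmap
  have hyM : F' - J x₀ ∈ M.topologicalClosure := by
    refine sub_mem (M.le_topologicalClosure ?_) ?_
    · exact Submodule.subset_span (Set.mem_insert _ _)
    · rw [← Submodule.topologicalClosure_coe] at hJx₀
      exact hJx₀
  -- the limit functional annihilates all chosen functionals
  have hzero : ∀ N, ∀ f ∈ Ts N, (F' - J x₀) f = 0 := by
    intro N f hf
    have hf1 : Tendsto (fun k => F f - f (xs (φ k))) atTop (𝓝 (F f - f x₀)) :=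
      tendsto_const_nhds.sub (hx₀ f)
    have hf2 : Tendsto (fun k => F f - f (xs (φ k))) atTop (𝓝 0) := by
      apply squeeze_zero_norm' ?_ tendsto_one_div_add_atTop_nhds_zero_nat
      filter_upwards [eventually_ge_atTop N] with k hk
      have hφk : N ≤ φ k + 1 := le_trans (le_trans hk hφ.le_apply) (Nat.le_succ _)
      have hmem : f ∈ Ts (φ k + 1) := hmono N (φ k + 1) hφk hf
      have hsm := hsmall (φ k) f hmem
      have hle : (1:ℝ)/((φ k : ℝ) + 1) ≤ 1/((k : ℝ)+1) := by
        apply one_div_le_one_div_of_le (by positivity)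
        have : k ≤ φ k := hφ.le_apply
        push_cast
        exact_mod_cast Nat.add_le_add_right this 1
      calc ‖F f - f (xs (φ k))‖ = |F f - f (xs (φ k))| := rfl
        _ ≤ 1/((φ k : ℝ)+1) := hsm.le
        _ ≤ 1/((k : ℝ)+1) := hle
    have h0 : F f - f x₀ = 0 := tendsto_nhds_unique hf1 hf2
    have happ : (F' - J x₀) f = F f - f x₀ := by
      rw [ContinuousLinearMap.sub_apply]
      rfl
    rw [happ, h0]
  -- conclude F' = J x₀
  have hkey : F' = J x₀ := by
    set y : StrongDual ℝ (StrongDual ℝ X) := F' - J x₀ with hy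
    have hnle : ∀ ε : ℝ, 0 < ε → ‖y‖ ≤ ε := by
      intro ε hε
      have hyc : y ∈ closure (M : Set (StrongDual ℝ (StrongDual ℝ X))) := by
        rw [← Submodule.topologicalClosure_coe]; exact hyM
      obtain ⟨z, hzM, hzd⟩ := Metric.mem_closure_iff.1 hyc (ε/4) (by positivity)
      set Msub : ℕ → Submodule ℝ (StrongDual ℝ (StrongDual ℝ X)) :=
        fun n => Submodule.span ℝ (insert F' (J '' {w | w ∈ (P n).1})) with hMsub
      have hMsubmono : Monotone Msub := by
        apply monotone_nat_of_le_succ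
        intro n
        apply Submodule.span_mono
        apply Set.insert_subset_insert
        apply Set.image_mono
        intro w hw
        rw [hPsucc n]
        exact List.mem_cons_of_mem _ hw
      have hzM' : ∃ n, z ∈ Msub n := by
        have hMle : M ≤ ⨆ n, Msub n := by
          apply Submodule.span_le.2
          rintro w (rfl | ⟨i, rfl⟩)
          · exact Submodule.mem_iSup_of_mem 0 (Submodule.subset_span (Set.mem_insert _ _))
          · exact Submodule.mem_iSup_of_mem (i+1) (Submodule.subset_span
              (Set.mem_insert_of_mem _
                (Set.mem_image_of_mem J (hxs_mem i (i+1) (Nat.lt_succ_self i)))))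
        exact (Submodule.mem_iSup_of_directed _ hMsubmono.directed_le).1 (hMle hzM)
      obtain ⟨n, hzn⟩ := hzM'
      obtain ⟨f, hf, hzf⟩ := hnorming n z hzn
      have hf1 : ‖f‖ ≤ 1 := hnorm (n+1) f hf
      have h0 : y f = 0 := hzero (n+1) f hf
      have hzy : ‖z - y‖ < ε/4 := by
        rw [← dist_eq_norm, dist_comm, dist_eq_norm, ← dist_eq_norm]
        exact hzd
      have hzf' : |z f| ≤ ε/4 := by
        have hdecomp : z f = (z - y) f + y f := by
          rw [ContinuousLinearMap.sub_apply]; ring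
        rw [hdecomp, h0, add_zero]
        calc |(z - y) f| ≤ ‖z - y‖ * ‖f‖ := (z - y).le_opNorm f
          _ ≤ (ε/4) * 1 := mul_le_mul hzy.le hf1 (norm_nonneg _) (by positivity)
          _ = ε/4 := mul_one _
      have hyz : ‖y - z‖ < ε/4 := by rw [← dist_eq_norm]; exact hzd
      calc ‖y‖ ≤ ‖z‖ + ‖y - z‖ := by
            have := norm_sub_norm_le y z
            linarith [norm_nonneg (y - z)]
        _ ≤ 2 * |z f| + ε/4 := add_le_add hzf hyz.le
        _ ≤ 2 * (ε/4) + ε/4 := by linarith [hzf']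
        _ ≤ ε := by linarith
    have hy0 : y = 0 := by
      by_contra hy0
      have hpos : 0 < ‖y‖ :=
        lt_of_le_of_ne (norm_nonneg y)
          (fun hc => hy0 ((ContinuousLinearMap.opNorm_zero_iff y).1 hc.symm))
      have := hnle (‖y‖/2) (by positivity)
      linarith
    have := sub_eq_zero.1 (by rw [← hy]; exact hy0)
    exact this
  refine ⟨x₀, hx₀B, ?_⟩
  have : WeakDual.toStrongDual (ESJ X x₀) = WeakDual.toStrongDual F := by
    rw [ESJ_toNormed, hF'def] at *
    exact (hkey.symm : _)
  exact (WeakDual.toStrongDual.injective this)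

lemma ES_injective : Function.Injective (ESJ X) := by
  intro a b hab
  have : (inclusionInDoubleDualLi ℝ (E := X)) a = (inclusionInDoubleDualLi ℝ (E := X)) b := by
    have := congrArg (WeakDual.toStrongDual (𝕜 := ℝ)) hab
    rwa [ESJ_toNormed, ESJ_toNormed] at this
  exact (inclusionInDoubleDualLi ℝ (E := X)).injective this
end aux

open Filter Topology

theorem stmt_16 (X : Type*) [NormedAddCommGroup X] [NormedSpace ℝ X] [CompleteSpace X]
    (h : ∀ x : ℕ → X, (∀ n, x n ∈ Metric.closedBall (0 : X) 1) →
      ∃ φ : ℕ → ℕ, StrictMono φ ∧ ∃ x₀ : X,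
        ∀ ξ : X →L[ℝ] ℝ, Tendsto (fun k => ξ (x (φ k))) atTop (𝓝 (ξ x₀))) :
    IsCompact (toWeakSpace ℝ X '' Metric.closedBall (0 : X) 1) := by
  classical
  set B : Set X := Metric.closedBall (0 : X) 1 with hB
  set S : Set (WeakDual ℝ (StrongDual ℝ X)) := ESJ X '' B with hS
  have hSsub : S ⊆ WeakDual.toStrongDual ⁻¹' (Metric.closedBall (0 : StrongDual ℝ (StrongDual ℝ X)) 1) := by
    rintro G ⟨x, hx, rfl⟩
    simp only [Set.mem_preimage, mem_closedBall_zero_iff]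
    rw [ESJ_toNormed]
    rw [(inclusionInDoubleDualLi ℝ (E := X)).norm_map]
    exact mem_closedBall_zero_iff.1 hx
  have hSclosed : IsClosed S := by
    refine isClosed_of_closure_subset fun G hG => ?_
    exact ES_closure_subset h hG
  have hScompact : IsCompact S :=
    (WeakDual.isCompact_closedBall (𝕜 := ℝ) (E := StrongDual ℝ X) 0 1).of_isClosed_subset hSclosed hSsub
  -- transfer along the (partial) inverse of the double-dual embedding
  let g : WeakDual ℝ (StrongDual ℝ X) → WeakSpace ℝ X := fun G =>
    if hG : ∃ x ∈ B, ESJ X x = G then toWeakSpace ℝ X hG.choose else toWeakSpace ℝ X 0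
  have himg : g '' S = toWeakSpace ℝ X '' B := by
    apply Set.Subset.antisymm
    · rintro w ⟨G, ⟨x, hx, rfl⟩, rfl⟩
      have hG : ∃ x' ∈ B, ESJ X x' = ESJ X x := ⟨x, hx, rfl⟩
      simp only [g, dif_pos hG]
      exact ⟨hG.choose, hG.choose_spec.1, rfl⟩
    · rintro w ⟨x, hx, rfl⟩
      refine ⟨ESJ X x, ⟨x, hx, rfl⟩, ?_⟩
      have hG : ∃ x' ∈ B, ESJ X x' = ESJ X x := ⟨x, hx, rfl⟩
      simp only [g, dif_pos hG]
      congr 1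
      exact ES_injective hG.choose_spec.2
  have hcont : ContinuousOn g S := by
    rw [continuousOn_iff_continuous_restrict]
    apply WeakBilin.continuous_of_continuous_eval
    intro l
    have heval : (fun p : S => (topDualPairing ℝ X).flip (S.restrict g p) l)
        = fun p : S => (p : WeakDual ℝ (StrongDual ℝ X)) l := by
      funext p
      obtain ⟨G, hGmem⟩ := p
      obtain ⟨x, hx, rfl⟩ := hGmem
      have hG : ∃ x' ∈ B, ESJ X x' = ESJ X x := ⟨x, hx, rfl⟩
      show (topDualPairing ℝ X).flip (g (ESJ X x)) l = _
      simp only [Set.restrict_apply, g, dif_pos hG]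
      have h1 : (topDualPairing ℝ X).flip (toWeakSpace ℝ X hG.choose) l
          = l hG.choose := rfl
      rw [h1]
      have h2 : ESJ X hG.choose = ESJ X x := hG.choose_spec.2
      calc l hG.choose = ESJ X hG.choose l := (ESJ_apply _ _).symm
        _ = ESJ X x l := by rw [h2]
    show Continuous (fun p : S => (topDualPairing ℝ X).flip (S.restrict g p) l)
    rw [heval]
    exact (WeakDual.eval_continuous l).comp continuous_subtype_val
  rw [← himg]
  exact hScompact.image_of_continuousOn hcont
end
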